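/- Let n > 1 be a squarefree integer. If n/P(n) is strictly 2-dense and P(n) < √n, then n is strictly 2-dense. -/

import Mathlib

/-- The divisors of `n` listed in increasing order. -/
def sortedDivisors (n : ℕ) : List ℕ := n.divisors.sort (· ≤ ·)

/-- A squarefree positive integer `n` with increasing divisor list
`1 = d₁ < d₂ < ⋯ < d_τ = n` is strictly 2-dense if `d_{i+1}/d_i < 2` for all
`i` with `1 < i < τ - 1`, while `d₂/d₁ = 2 = d_τ/d_{τ-1}`. -/
def IsStrictlyTwoDense (n : ℕ) : Prop :=
  Squarefree n ∧ 0 < n ∧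
  (sortedDivisors n).getD 1 0 = 2 * (sortedDivisors n).getD 0 0 ∧
  (sortedDivisors n).getD ((sortedDivisors n).length - 1) 0 =
    2 * (sortedDivisors n).getD ((sortedDivisors n).length - 2) 0 ∧
  ∀ i : ℕ, 2 ≤ i → i + 2 ≤ (sortedDivisors n).length →
    (sortedDivisors n).getD i 0 < 2 * (sortedDivisors n).getD (i - 1) 0

/-- `largestPrimeFactor n` is the largest prime factor of `n`, with
`largestPrimeFactor 1 = 1`. -/
def largestPrimeFactor (n : ℕ) : ℕ :=
  if n ≤ 1 then 1 else n.primeFactors.sup id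

/-- Divisor-interval density: every divisor `d` with `2 ≤ d`, `2d < n` has a
divisor strictly between `d` and `2d`. -/
def DenseDiv (n : ℕ) : Prop :=
  ∀ d, d ∣ n → 2 ≤ d → 2 * d < n → ∃ e, e ∣ n ∧ d < e ∧ e < 2 * d

namespace SDAux

lemma sd_sorted (n : ℕ) : (sortedDivisors n).SortedLT :=
  Finset.sortedLT_sort _

lemma sd_mem {n d : ℕ} (hn : 0 < n) : d ∈ sortedDivisors n ↔ d ∣ n := by
  simp [sortedDivisors, Nat.mem_divisors, hn.ne']

lemma sd_mono {n i j : ℕ} (hij : i < j) (hj : j < (sortedDivisors n).length) :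
    (sortedDivisors n).getD i 0 < (sortedDivisors n).getD j 0 := by
  rw [List.getD_eq_getElem _ _ (hij.trans hj), List.getD_eq_getElem _ _ hj]
  exact List.SortedLT.strictMono_get (sd_sorted n)
    (show (⟨i, hij.trans hj⟩ : Fin _) < ⟨j, hj⟩ from hij)

lemma sd_index {n d : ℕ} (hn : 0 < n) (hd : d ∣ n) :
    ∃ i, i < (sortedDivisors n).length ∧ (sortedDivisors n).getD i 0 = d := by
  have : d ∈ sortedDivisors n := (sd_mem hn).2 hd
  obtain ⟨⟨i, hi⟩, h⟩ := List.mem_iff_get.1 this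
  exact ⟨i, hi, by rw [List.getD_eq_getElem _ _ hi]; exact h⟩

lemma sd_dvd {n i : ℕ} (hn : 0 < n) (hi : i < (sortedDivisors n).length) :
    (sortedDivisors n).getD i 0 ∣ n := by
  rw [List.getD_eq_getElem _ _ hi]
  exact (sd_mem hn).1 (List.getElem_mem _)

lemma two_le_length {n : ℕ} (hn : 1 < n) : 2 ≤ (sortedDivisors n).length := by
  have hnpos : 0 < n := by omega
  obtain ⟨i, hi, hig⟩ := sd_index hnpos (one_dvd n)
  obtain ⟨j, hj, hjg⟩ := sd_index hnpos (dvd_refl n)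
  by_contra h
  push_neg at h
  have hij : i = 0 ∧ j = 0 := by omega
  obtain ⟨rfl, rfl⟩ := hij
  omega

lemma sd_get0 {n : ℕ} (hn : 1 < n) : (sortedDivisors n).getD 0 0 = 1 := by
  have hnpos : 0 < n := by omega
  obtain ⟨i, hi, hig⟩ := sd_index hnpos (one_dvd n)
  have hd := sd_dvd hnpos (show 0 < (sortedDivisors n).length by omega)
  rcases Nat.eq_zero_or_pos i with rfl | hipos
  · exact hig
  · have hlt := sd_mono (n := n) hipos hi
    have h1 : 1 ≤ (sortedDivisors n).getD 0 0 := by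
      rcases Nat.eq_zero_or_pos ((sortedDivisors n).getD 0 0) with h | h
      · rw [h] at hd
        exact absurd (Nat.eq_zero_of_zero_dvd hd) (by omega)
      · exact h
    omega

lemma sd_getLast {n : ℕ} (hn : 1 < n) :
    (sortedDivisors n).getD ((sortedDivisors n).length - 1) 0 = n := by
  have hlen := two_le_length hn
  have hnpos : 0 < n := by omega
  obtain ⟨i, hi, hig⟩ := sd_index hnpos (dvd_refl n)
  have hd := sd_dvd hnpos
    (show (sortedDivisors n).length - 1 < (sortedDivisors n).length by omega)
  have hle : (sortedDivisors n).getD ((sortedDivisors n).length - 1) 0 ≤ n :=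
    Nat.le_of_dvd hnpos hd
  rcases Nat.lt_or_ge i ((sortedDivisors n).length - 1) with h | h
  · have := sd_mono (n := n) h (by omega)
    omega
  · have hieq : i = (sortedDivisors n).length - 1 := by omega
    subst hieq
    omega

lemma sd_get1 {n : ℕ} (hn : 1 < n) : (sortedDivisors n).getD 1 0 = n.minFac := by
  have hlen := two_le_length hn
  have hnpos : 0 < n := by omega
  obtain ⟨i, hi, hig⟩ := sd_index hnpos (Nat.minFac_dvd n)
  have hd := sd_dvd hnpos (show 1 < (sortedDivisors n).length by omega)
  have h0 := sd_get0 hn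
  have hmf2 : 2 ≤ n.minFac := (Nat.minFac_prime (by omega)).two_le
  have hgt : 1 < (sortedDivisors n).getD 1 0 := by
    have := sd_mono (n := n) (show 0 < 1 by omega) (by omega)
    omega
  have hge : n.minFac ≤ (sortedDivisors n).getD 1 0 := Nat.minFac_le_of_dvd hgt hd
  rcases Nat.lt_or_ge 1 i with h | h
  · have := sd_mono (n := n) h hi
    omega
  · rcases Nat.eq_zero_or_pos i with rfl | h'
    · omega
    · have hieq : i = 1 := by omega
      subst hieq
      omega

lemma sd_getPen {n : ℕ} (hn : 1 < n) :
    (sortedDivisors n).getD ((sortedDivisors n).length - 2) 0 = n / n.minFac := by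
  have hlen := two_le_length hn
  have hnpos : 0 < n := by omega
  have hmfp := Nat.minFac_prime (show n ≠ 1 by omega)
  have hmfdvd := Nat.minFac_dvd n
  obtain ⟨i, hi, hig⟩ := sd_index hnpos (Nat.div_dvd_of_dvd hmfdvd)
  have hd := sd_dvd hnpos
    (show (sortedDivisors n).length - 2 < (sortedDivisors n).length by omega)
  have hlast := sd_getLast hn
  have hq : n / n.minFac < n := Nat.div_lt_self hnpos hmfp.one_lt
  have hpenlt : (sortedDivisors n).getD ((sortedDivisors n).length - 2) 0 < n := by
    have := sd_mono (n := n)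
      (show (sortedDivisors n).length - 2 < (sortedDivisors n).length - 1 by omega)
      (by omega)
    omega
  have key : ∀ d, d ∣ n → d < n → d ≤ n / n.minFac := by
    intro d hdvd hlt
    obtain ⟨c, hc⟩ := hdvd
    have hdpos : 0 < d := by
      rcases Nat.eq_zero_or_pos d with rfl | h
      · simp at hc; omega
      · exact h
    have hc2 : 2 ≤ c := by
      rcases Nat.lt_or_ge c 2 with h | h
      · interval_cases c <;> omega
      · exact h
    have hmle : n.minFac ≤ c := Nat.minFac_le_of_dvd hc2 ⟨d, by rw [hc]; ring⟩
    have hmul : d * n.minFac ≤ n := by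
      calc d * n.minFac ≤ d * c := Nat.mul_le_mul_left d hmle
        _ = n := hc.symm
    exact (Nat.le_div_iff_mul_le hmfp.pos).2 hmul
  have h1 : (sortedDivisors n).getD ((sortedDivisors n).length - 2) 0 ≤ n / n.minFac :=
    key _ hd hpenlt
  have h2 : i ≤ (sortedDivisors n).length - 2 := by
    by_contra h
    push_neg at h
    have hieq : i = (sortedDivisors n).length - 1 := by omega
    subst hieq
    omega
  rcases Nat.lt_or_ge i ((sortedDivisors n).length - 2) with h | h
  · have := sd_mono (n := n) h (by omega)
    omega
  · have hieq : i = (sortedDivisors n).length - 2 := by omega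
    subst hieq
    omega

lemma one_lt_of_std {m : ℕ} (h : IsStrictlyTwoDense m) : 1 < m := by
  obtain ⟨_, hpos, h1, _, _⟩ := h
  by_contra hle
  have : m = 1 := by omega
  subst this
  have hsd1 : sortedDivisors 1 = [1] := by
    rw [sortedDivisors, Nat.divisors_one, Finset.sort_singleton]
  rw [hsd1] at h1
  simp at h1

/-- Characterization of strict 2-density via `DenseDiv`. -/
lemma std_iff {n : ℕ} (hn : 1 < n) :
    IsStrictlyTwoDense n ↔ Squarefree n ∧ 2 ∣ n ∧ DenseDiv n := by
  have hnpos : 0 < n := by omega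
  have hlen := two_le_length hn
  have h0 := sd_get0 hn
  have h1 := sd_get1 hn
  have hlast := sd_getLast hn
  have hpen := sd_getPen hn
  have hmfp := Nat.minFac_prime (show n ≠ 1 by omega)
  constructor
  · rintro ⟨hsf, -, hfirst, hsecond, hmid⟩
    have hmf2 : n.minFac = 2 := by omega
    have h2dvd : 2 ∣ n := hmf2 ▸ Nat.minFac_dvd n
    refine ⟨hsf, h2dvd, ?_⟩
    intro d hdvd hd2 h2d
    obtain ⟨j, hj, hjg⟩ := sd_index hnpos hdvd
    have hj1 : 1 ≤ j := by
      by_contra h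
      push_neg at h
      have hieq : j = 0 := by omega
      subst hieq
      omega
    obtain ⟨k, hk, hkg⟩ := sd_index hnpos (Nat.div_dvd_of_dvd h2dvd)
    obtain ⟨t, ht⟩ := h2dvd
    have hn2 : n / 2 = t := by omega
    have hdk : d < n / 2 := by omega
    have hjk : j < k := by
      rcases Nat.lt_or_ge j k with h | h
      · exact h
      · rcases Nat.lt_or_ge k j with h' | h'
        · have := sd_mono (n := n) h' hj; omega
        · have hieq : j = k := by omega
          subst hieq
          omega
    have hnext_le : (sortedDivisors n).getD (j+1) 0 ≤ n / 2 := by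
      rcases Nat.lt_or_ge (j+1) k with h | h
      · have := sd_mono (n := n) h hk; omega
      · have hieq : j + 1 = k := by omega
        rw [← hieq] at hkg
        omega
    have hj1k : j + 1 < (sortedDivisors n).length := by omega
    have hidx : j + 1 + 2 ≤ (sortedDivisors n).length := by
      by_contra h
      push_neg at h
      have : j + 1 = (sortedDivisors n).length - 1 := by omega
      rw [this] at hnext_le
      omega
    have hm := hmid (j+1) (by omega) hidx
    simp only [Nat.add_sub_cancel] at hm
    refine ⟨(sortedDivisors n).getD (j+1) 0, sd_dvd hnpos hj1k, ?_, by omega⟩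
    have := sd_mono (n := n) (show j < j + 1 by omega) hj1k
    omega
  · rintro ⟨hsf, h2dvd, hdense⟩
    have hmf2 : n.minFac = 2 := by
      have hle := Nat.minFac_le_of_dvd (le_refl 2) h2dvd
      have := hmfp.two_le
      omega
    obtain ⟨t, ht⟩ := h2dvd
    have hn2 : n / n.minFac = t := by rw [hmf2]; omega
    refine ⟨hsf, hnpos, by omega, by omega, ?_⟩
    intro i hi2 hilen
    have hi1 : i - 1 < (sortedDivisors n).length := by omega
    have hi : i < (sortedDivisors n).length := by omega
    have hdd' : (sortedDivisors n).getD (i-1) 0 < (sortedDivisors n).getD i 0 :=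
      sd_mono (show i - 1 < i by omega) hi
    have hd2 : 2 ≤ (sortedDivisors n).getD (i-1) 0 := by
      rcases Nat.eq_or_lt_of_le (show 1 ≤ i - 1 by omega) with h | h
      · rw [← h]
        omega
      · have := sd_mono (n := n) h hi1
        omega
    have hd'le : (sortedDivisors n).getD i 0 ≤ t := by
      rcases Nat.lt_or_ge i ((sortedDivisors n).length - 2) with h | h
      · have := sd_mono (n := n) h (by omega)
        omega
      · have hieq : i = (sortedDivisors n).length - 2 := by omega
        subst hieq
        omega
    have h2d : 2 * (sortedDivisors n).getD (i-1) 0 < n := by omega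
    obtain ⟨e, hedvd, he1, he2⟩ := hdense _ (sd_dvd hnpos hi1) hd2 h2d
    obtain ⟨k, hk, hkg⟩ := sd_index hnpos hedvd
    have hik : i - 1 < k := by
      rcases Nat.lt_or_ge (i-1) k with h | h
      · exact h
      · rcases Nat.lt_or_ge k (i-1) with h' | h'
        · have := sd_mono (n := n) h' hi1; omega
        · have hieq : i - 1 = k := by omega
          rw [← hieq] at hkg
          omega
    have : (sortedDivisors n).getD i 0 ≤ e := by
      rcases Nat.lt_or_ge i k with h | h
      · have := sd_mono (n := n) h hk; omega
      · have hieq : i = k := by omega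
        subst hieq
        omega
    omega

/-- From `DenseDiv`, any half-open interval `(x, 2x]` with `1 ≤ x < m`
contains a divisor of `m`. -/
lemma exists_max_divisor_le {m x : ℕ} (hm : 0 < m) (h2 : 2 ∣ m) (hx : 2 ≤ x) :
    ∃ e₀, e₀ ∣ m ∧ 2 ≤ e₀ ∧ e₀ ≤ x ∧ ∀ e, e ∣ m → e ≤ x → e ≤ e₀ := by
  classical
  have h2mem : (2 : ℕ) ∈ m.divisors.filter (· ≤ x) := by
    simp only [Finset.mem_filter, Nat.mem_divisors]
    exact ⟨⟨h2, hm.ne'⟩, hx⟩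
  have hne : (m.divisors.filter (· ≤ x)).Nonempty := ⟨2, h2mem⟩
  have hmem := (m.divisors.filter (· ≤ x)).max'_mem hne
  simp only [Finset.mem_filter, Nat.mem_divisors] at hmem
  refine ⟨(m.divisors.filter (· ≤ x)).max' hne, hmem.1.1,
    Finset.le_max' _ 2 h2mem, hmem.2, ?_⟩
  intro e he hle
  refine Finset.le_max' _ e ?_
  simp only [Finset.mem_filter, Nat.mem_divisors]
  exact ⟨⟨he, hm.ne'⟩, hle⟩

/-- From `DenseDiv`, any half-open interval `(x, 2x]` with `1 ≤ x < m`
contains a divisor of `m`. -/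
lemma chain {m : ℕ} (hm : 1 < m) (h2 : 2 ∣ m) (hD : DenseDiv m) :
    ∀ x, 1 ≤ x → x < m → ∃ e, e ∣ m ∧ x < e ∧ e ≤ 2 * x := by
  intro x hx1 hxm
  have hmpos : 0 < m := by omega
  rcases Nat.eq_or_lt_of_le hx1 with h | hx2
  · exact ⟨2, h2, by omega, by omega⟩
  obtain ⟨e₀, he₀dvd, he₀2, he₀le, hmax⟩ := exists_max_divisor_le hmpos h2 hx2
  rcases Nat.lt_or_ge (2 * e₀) m with h | h
  · obtain ⟨e, hedvd, he1, he2⟩ := hD e₀ he₀dvd he₀2 h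
    refine ⟨e, hedvd, ?_, by omega⟩
    by_contra hc
    push_neg at hc
    have := hmax e hedvd hc
    omega
  · exact ⟨m, dvd_rfl, hxm, by omega⟩

end SDAux

theorem strictlyTwoDense_of_div_largestPrimeFactor (n : ℕ) (hn : 1 < n)
    (hsf : Squarefree n)
    (h1 : IsStrictlyTwoDense (n / largestPrimeFactor n))
    (h2 : (largestPrimeFactor n : ℝ) < Real.sqrt (n : ℝ)) :
    IsStrictlyTwoDense n := by
  classical
  set p := largestPrimeFactor n with hp
  -- p is a prime dividing n
  have hpdef : p = n.primeFactors.sup id := by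
    rw [hp, largestPrimeFactor, if_neg (by omega)]
  have hne : n.primeFactors.Nonempty := Nat.nonempty_primeFactors.2 hn
  obtain ⟨b, hbmem, hbsup⟩ := Finset.exists_mem_eq_sup n.primeFactors hne id
  have hpmem : p ∈ n.primeFactors := by rw [hpdef, hbsup]; exact hbmem
  have hpp : p.Prime := Nat.prime_of_mem_primeFactors hpmem
  have hpdvd : p ∣ n := Nat.dvd_of_mem_primeFactors hpmem
  set m := n / p with hm
  have hnm : n = p * m := (Nat.mul_div_cancel' hpdvd).symm
  have hm1 : 1 < m := SDAux.one_lt_of_std h1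
  have hmdvd : m ∣ n := ⟨p, by rw [hnm]; ring⟩
  -- p does not divide m
  have hpm : ¬ p ∣ m := by
    intro hc
    have : p * p ∣ n := by
      rw [hnm]
      exact mul_dvd_mul_left p hc
    exact hpp.not_isUnit (hsf p this)
  -- unpack h1
  obtain ⟨-, h2m, hDm⟩ := (SDAux.std_iff hm1).1 h1
  have hmsf : Squarefree m := hsf.squarefree_of_dvd hmdvd
  -- p is odd
  have hp2 : p ≠ 2 := by
    intro hc
    rw [hc] at hpm
    exact hpm h2m
  have hpodd : ¬ 2 ∣ p := by
    intro hc
    have := (Nat.prime_dvd_prime_iff_eq Nat.prime_two hpp).1 hc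
    omega
  -- p < m from h2
  have hplm : p < m := by
    have hsq : (p : ℝ) ^ 2 < (n : ℝ) := by
      have h0 : (0 : ℝ) ≤ (p : ℝ) := by positivity
      have := (Real.lt_sqrt h0).1 (by exact_mod_cast h2)
      exact this
    have hp2n : p * p < n := by exact_mod_cast (by rw [sq] at hsq; exact_mod_cast hsq : ((p*p : ℕ) : ℝ) < (n : ℝ))
    rw [hnm] at hp2n
    exact lt_of_mul_lt_mul_left hp2n (Nat.zero_le p)
  have hchain := SDAux.chain hm1 h2m hDm
  have hppos : 0 < p := hpp.pos
  have hp3 : 3 ≤ p := by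
    have := hpp.two_le
    omega
  -- divisors of m are not divisible by p
  have hnodvd : ∀ e, e ∣ m → ¬ p ∣ e := fun e he hc => hpm (hc.trans he)
  -- main: DenseDiv n
  have hDn : DenseDiv n := by
    intro d hdvd hd2 h2d
    by_cases hpd : p ∣ d
    · -- d = p * c, c ∣ m
      obtain ⟨c, hc⟩ := hpd
      have hcm : c ∣ m := by
        have : p * c ∣ p * m := by rw [← hc, ← hnm]; exact hdvd
        exact (Nat.mul_dvd_mul_iff_left hppos).1 this
      have h2cm : 2 * c < m := by
        have h' : p * (2 * c) < p * m := by
          calc p * (2 * c) = 2 * (p * c) := by ring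
            _ = 2 * d := by rw [hc]
            _ < n := h2d
            _ = p * m := hnm
        exact lt_of_mul_lt_mul_left h' (Nat.zero_le p)
      rcases Nat.lt_or_ge c 2 with hc1 | hc2
      · -- c = 1, d = p; find divisor of m in (p, 2p)
        have hdp : d = p := by
          rcases Nat.eq_zero_or_pos c with rfl | h
          · omega
          · have : c = 1 := by omega
            rw [hc, this, mul_one]
        subst hdp
        obtain ⟨e, hedvd, he1, he2⟩ := hchain p (by omega) hplm
        refine ⟨e, hedvd.trans hmdvd, he1, ?_⟩
        rcases Nat.lt_or_ge e (2 * p) with h | h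
        · exact h
        · exfalso
          have he2d : e = 2 * p := by omega
          subst he2d
          exact hnodvd _ hedvd ⟨2, by ring⟩
      · obtain ⟨e, hedvd, he1, he2⟩ := hDm c hcm hc2 h2cm
        exact ⟨p * e, by rw [hnm]; exact mul_dvd_mul_left p hedvd,
          by rw [hc]; exact Nat.mul_lt_mul_of_pos_left he1 hppos,
          by rw [hc]; calc p * e < p * (2 * c) := Nat.mul_lt_mul_of_pos_left he2 hppos
            _ = 2 * (p * c) := by ring⟩
    · -- d ∣ m
      have hcop : Nat.Coprime d p := ((hpp.coprime_iff_not_dvd).2 hpd).symm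
      have hdm : d ∣ m := hcop.dvd_of_dvd_mul_left (by rw [← hnm]; exact hdvd)
      rcases Nat.lt_or_ge (2 * d) m with hlt | hge
      · obtain ⟨e, hedvd, he1, he2⟩ := hDm d hdm hd2 hlt
        exact ⟨e, hedvd.trans hmdvd, he1, he2⟩
      · -- m ≤ 2d
        have hdlem : d ≤ m := Nat.le_of_dvd (by omega) hdm
        rcases Nat.lt_or_ge d p with hdp | hpd'
        · -- d < p < m ≤ 2d
          exact ⟨p, hpdvd, hdp, by omega⟩
        · -- p ≤ d (and p ≠ d since p ∤ d); use x = d / p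
          have hxval := Nat.div_add_mod d p
          have hmod : d % p < p := Nat.mod_lt _ hppos
          have hx1 : 1 ≤ d / p := (Nat.one_le_div_iff hppos).2 hpd'
          have hxm : d / p < m :=
            lt_of_lt_of_le (Nat.div_lt_self (by omega) hpp.one_lt) hdlem
          obtain ⟨e, hedvd, he1, he2⟩ := hchain (d / p) hx1 hxm
          refine ⟨p * e, by rw [hnm]; exact mul_dvd_mul_left p hedvd, ?_, ?_⟩
          · have hstep : p * (d / p) + p ≤ p * e := by
              have h1e : d / p + 1 ≤ e := he1
              calc p * (d / p) + p = p * (d / p + 1) := by ring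
                _ ≤ p * e := Nat.mul_le_mul_left p h1e
            omega
          · have hle : p * e ≤ 2 * d := by
              calc p * e ≤ p * (2 * (d / p)) := Nat.mul_le_mul_left p he2
                _ = 2 * (p * (d / p)) := by ring
                _ ≤ 2 * d := by omega
            rcases Nat.lt_or_ge (p * e) (2 * d) with h | h
            · exact h
            · exfalso
              have heq : 2 * d = p * e := by omega
              have hpdvd2 : p ∣ 2 * d := ⟨e, heq⟩
              rcases (Nat.Prime.dvd_mul hpp).1 hpdvd2 with h' | h'
              · have := Nat.le_of_dvd (by omega) h'
                omega
              · exact hpd h'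
  have h2n : 2 ∣ n := h2m.trans hmdvd
  exact (SDAux.std_iff hn).2 ⟨hsf, h2n, hDn⟩
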